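/- Fix a real constant C4 > 0 and set k_n = ⌈C4·ln n⌉. For every sequence (q_n) of reals with 0 ≤ q_n ≤ 1 for all n, if q_n·n/ln n → ∞ as n → ∞, then n · b(n, q_n, k_n) → 0 as n → ∞. -/

import Mathlib

open Filter

/-- The binomial probability `b(n, p, j) = C(n, j) p^j (1-p)^(n-j)`. -/
noncomputable def binomProb (n : ℕ) (p : ℝ) (j : ℕ) : ℝ :=
  (n.choose j : ℝ) * p ^ j * (1 - p) ^ (n - j)

lemma pow_div_factorial_le_exp (x : ℝ) (hx : 0 ≤ x) (k : ℕ) :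
    x ^ k / k.factorial ≤ Real.exp x := by
  have h := Real.sum_le_exp_of_nonneg hx (k + 1)
  refine le_trans ?_ h
  have := Finset.single_le_sum (f := fun i => x ^ i / (i.factorial : ℝ))
    (fun i _ => by positivity) (Finset.self_mem_range_succ k)
  simpa using this

lemma log_le_two_sqrt {x : ℝ} (hx : 0 < x) : Real.log x ≤ 2 * Real.sqrt x := by
  have h1 := Real.log_le_sub_one_of_pos (Real.sqrt_pos.mpr hx)
  have h2 : Real.log (Real.sqrt x) = Real.log x / 2 := Real.log_sqrt hx.le
  have h3 : (0:ℝ) ≤ Real.sqrt x := Real.sqrt_nonneg x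
  linarith

lemma pointwise_bound (n k : ℕ) (p : ℝ) (hp0 : 0 ≤ p) (hp1 : p ≤ 1)
    (hk1 : 1 ≤ k) (hkn : k ≤ n) (hm : 0 < p * n) :
    (n : ℝ) * binomProb n p k ≤
      Real.exp (Real.log n + 2 * Real.sqrt (k * (p * n)) + 2 * k - p * n) := by
  set m : ℝ := p * n with hmdef
  have hn0 : (0:ℝ) < n := by nlinarith
  have hk0 : (0:ℝ) < k := by exact_mod_cast hk1
  have hmk : 0 < m / k := by positivity
  have h1p : (0:ℝ) ≤ 1 - p := by linarith
  have hcast : ((n - k : ℕ) : ℝ) = (n:ℝ) - k := by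
    push_cast [Nat.cast_sub hkn]; ring
  have step1 : binomProb n p k ≤ m ^ k / k.factorial * Real.exp (-(p * ((n:ℝ) - k))) := by
    have hc : (n.choose k : ℝ) ≤ (n:ℝ) ^ k / k.factorial := by
      have := Nat.choose_le_pow_div (α := ℝ) k n
      push_cast at this ⊢; exact this
    have hpow : (1 - p) ^ (n - k) ≤ Real.exp (-(p * ((n:ℝ) - k))) := by
      have h1 : 1 - p ≤ Real.exp (-p) := by
        have := Real.add_one_le_exp (-p); linarith
      calc (1 - p) ^ (n - k) ≤ (Real.exp (-p)) ^ (n - k) :=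
            pow_le_pow_left₀ h1p h1 _
        _ = Real.exp (-(p * ((n:ℝ) - k))) := by
            rw [← Real.exp_nat_mul]; congr 1; rw [hcast]; ring
    have h2 : (n.choose k : ℝ) * p ^ k * (1 - p) ^ (n - k)
        ≤ ((n:ℝ) ^ k / k.factorial) * p ^ k * Real.exp (-(p * ((n:ℝ) - k))) := by
      apply mul_le_mul _ hpow (pow_nonneg h1p _) (by positivity)
      exact mul_le_mul_of_nonneg_right hc (pow_nonneg hp0 _)
    calc binomProb n p k ≤ ((n:ℝ) ^ k / k.factorial) * p ^ k * Real.exp (-(p * ((n:ℝ) - k))) := h2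
      _ = m ^ k / k.factorial * Real.exp (-(p * ((n:ℝ) - k))) := by
          rw [hmdef, mul_pow]; ring
  have step2 : m ^ k / k.factorial ≤ Real.exp (k * Real.log (m / k) + k) := by
    have e1 : m ^ k / k.factorial = (m / k) ^ k * ((k:ℝ) ^ k / k.factorial) := by
      field_simp
      rw [div_pow, div_mul_cancel₀ _ (pow_ne_zero _ hk0.ne')]
    have e2 : (k:ℝ) ^ k / k.factorial ≤ Real.exp k :=
      pow_div_factorial_le_exp _ hk0.le k
    have e3 : (m / k) ^ k = Real.exp (k * Real.log (m / k)) := by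
      rw [← Real.exp_log hmk, ← Real.exp_nat_mul, Real.exp_log hmk]
    calc m ^ k / k.factorial = (m / k) ^ k * ((k:ℝ) ^ k / k.factorial) := e1
      _ ≤ (m / k) ^ k * Real.exp k := by
          exact mul_le_mul_of_nonneg_left e2 (by positivity)
      _ = Real.exp (k * Real.log (m / k) + k) := by rw [e3, ← Real.exp_add]
  have hsq : Real.sqrt ((k:ℝ) * m) = k * Real.sqrt (m / k) := by
    rw [show (k:ℝ) * m = (k:ℝ)^2 * (m / k) by field_simp,
      Real.sqrt_mul (sq_nonneg _), Real.sqrt_sq hk0.le]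
  have hlog2 : (k:ℝ) * Real.log (m / k) ≤ 2 * Real.sqrt ((k:ℝ) * m) := by
    have h := log_le_two_sqrt hmk
    have := mul_le_mul_of_nonneg_left h hk0.le
    rw [hsq]; nlinarith [Real.sqrt_nonneg (m / k)]
  have hexp : Real.log n + ((k:ℝ) * Real.log (m / k) + k) + (-(p * ((n:ℝ) - k)))
      ≤ Real.log n + 2 * Real.sqrt (k * m) + 2 * k - m := by
    have hpk : p * k ≤ k := by nlinarith
    nlinarith
  calc (n:ℝ) * binomProb n p k
      ≤ (n:ℝ) * (m ^ k / k.factorial * Real.exp (-(p * ((n:ℝ) - k)))) := by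
        apply mul_le_mul_of_nonneg_left step1 hn0.le
    _ ≤ (n:ℝ) * (Real.exp (k * Real.log (m / k) + k) * Real.exp (-(p * ((n:ℝ) - k)))) := by
        apply mul_le_mul_of_nonneg_left _ hn0.le
        exact mul_le_mul_of_nonneg_right step2 (Real.exp_nonneg _)
    _ = Real.exp (Real.log n + ((k:ℝ) * Real.log (m / k) + k) + (-(p * ((n:ℝ) - k)))) := by
        simp only [Real.exp_add, Real.exp_log hn0]; ring
    _ ≤ Real.exp (Real.log n + 2 * Real.sqrt (k * m) + 2 * k - m) :=
        Real.exp_le_exp.mpr hexp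

/-- If a bucket has probability mass `q_n = ω(ln n / n)`, then the probability that it
contains exactly `⌈C4 ln n⌉` of the `n` sampled keys, multiplied by `n`, vanishes. -/
theorem stmt_2 (C4 : ℝ) (hC4 : 0 < C4) (q : ℕ → ℝ)
    (hq : ∀ n : ℕ, 0 ≤ q n ∧ q n ≤ 1)
    (hω : Tendsto (fun n : ℕ => q n * n / Real.log n) atTop atTop) :
    Tendsto (fun n : ℕ => (n : ℝ) * binomProb n (q n) ⌈C4 * Real.log n⌉₊)
      atTop (nhds 0) := by
  set K : ℕ → ℕ := fun n => ⌈C4 * Real.log n⌉₊ with hK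
  set m : ℕ → ℝ := fun n => q n * n with hm
  have hlog : Tendsto (fun n : ℕ => Real.log n) atTop atTop :=
    Real.tendsto_log_atTop.comp tendsto_natCast_atTop_atTop
  have hmtop : Tendsto m atTop atTop := by
    have h1 := hω.atTop_mul_atTop₀ hlog
    apply h1.congr'
    filter_upwards [eventually_gt_atTop 1] with n hn
    have hl : Real.log n ≠ 0 := ne_of_gt (Real.log_pos (by exact_mod_cast hn))
    simp only [hm]; field_simp
  set ε : ℝ := 1 / (64 * (C4 + 1)) with hε
  have hεpos : 0 < ε := by positivity
  have hε64 : ε ≤ 1 / 64 := by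
    rw [hε]; rw [div_le_div_iff₀ (by positivity) (by norm_num)]; nlinarith
  set E : ℕ → ℝ := fun n =>
    Real.log n + 2 * Real.sqrt ((K n : ℝ) * m n) + 2 * (K n) - m n with hE
  have hboth : ∀ᶠ n : ℕ in atTop,
      ((n : ℝ) * binomProb n (q n) (K n) ≤ Real.exp (E n)) ∧ E n ≤ -(m n) / 2 := by
    filter_upwards [hlog.eventually_ge_atTop 1, hω.eventually_ge_atTop (1/ε),
      eventually_ge_atTop 3] with n h1 h2 h3
    obtain ⟨hq0, hq1⟩ := hq n
    have hlogpos : 0 < Real.log n := lt_of_lt_of_le one_pos h1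
    have h2' : Real.log n * (1/ε) ≤ m n := by
      have := mul_le_mul_of_nonneg_left h2 hlogpos.le
      rwa [mul_div_cancel₀ _ (ne_of_gt hlogpos)] at this
    have hmn : Real.log n ≤ ε * m n := by
      calc Real.log n = ε * (Real.log n * (1/ε)) := by field_simp
        _ ≤ ε * m n := mul_le_mul_of_nonneg_left h2' hεpos.le
    have hm0 : 0 < m n := by nlinarith
    have hKreal : (K n : ℝ) ≤ (C4 + 1) * Real.log n := by
      have hc := Nat.ceil_lt_add_one (by positivity : (0:ℝ) ≤ C4 * Real.log n)
      simp only [hK]; nlinarith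
    have hKm : (K n : ℝ) ≤ m n / 64 := by
      calc (K n : ℝ) ≤ (C4 + 1) * Real.log n := hKreal
        _ ≤ (C4 + 1) * (ε * m n) := mul_le_mul_of_nonneg_left hmn (by positivity)
        _ = m n / 64 := by rw [hε]; field_simp
    have hK1 : 1 ≤ K n := Nat.ceil_pos.mpr (by positivity)
    have hn3 : (3:ℝ) ≤ n := by exact_mod_cast h3
    have hKn : K n ≤ n := by
      have hmln : m n ≤ n := by
        have : q n * n ≤ 1 * n := by
          apply mul_le_mul_of_nonneg_right hq1 (by positivity)
        simpa [hm] using this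
      have : (K n : ℝ) ≤ (n : ℝ) := by nlinarith
      exact_mod_cast this
    have hb := pointwise_bound n (K n) (q n) hq0 hq1 hK1 hKn (by simpa [hm] using hm0)
    constructor
    · simpa [hE, hm] using hb
    · have hsq : Real.sqrt ((K n : ℝ) * m n) ≤ m n / 8 := by
        have hle : (K n : ℝ) * m n ≤ (m n / 8)^2 := by nlinarith
        calc Real.sqrt ((K n : ℝ) * m n) ≤ Real.sqrt ((m n / 8)^2) :=
              Real.sqrt_le_sqrt hle
          _ = m n / 8 := Real.sqrt_sq (by positivity)
      simp only [hE]; nlinarith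
  have hEbot : Tendsto E atTop atBot := by
    have hneg : Tendsto (fun n => -(m n)) atTop atBot := tendsto_neg_atBot_iff.mpr hmtop
    have h2 : Tendsto (fun n => -(m n) / 2) atTop atBot :=
      hneg.atBot_div_const (by norm_num)
    exact tendsto_atBot_mono' atTop (hboth.mono fun n h => h.2) h2
  have hexp0 : Tendsto (fun n => Real.exp (E n)) atTop (nhds 0) :=
    Real.tendsto_exp_atBot.comp hEbot
  apply squeeze_zero' _ (hboth.mono fun n h => h.1) hexp0
  filter_upwards with n
  obtain ⟨hq0, hq1⟩ := hq n
  unfold binomProb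
  have : (0:ℝ) ≤ 1 - q n := by linarith
  positivity
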